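/- Let p, q ≥ 2 and m ≥ 3 be integers, and set α² = (cos(π/p - π/q) + cos(2π/m)) / (2 sin(π/p) sin(π/q)). Then α² < 1 if and only if 1/p + 1/q + 2/m > 1. -/

import Mathlib

open Real

/-- For integers `p, q ≥ 2` and `m ≥ 3`, with
`α² = (cos(π/p - π/q) + cos(2π/m)) / (2 sin(π/p) sin(π/q))`, one has
`α² < 1 ↔ 1/p + 1/q + 2/m > 1`. -/
theorem stmt_1 (p q m : ℕ) (hp : 2 ≤ p) (hq : 2 ≤ q) (hm : 3 ≤ m) :
    (cos (π / p - π / q) + cos (2 * π / m)) / (2 * sin (π / p) * sin (π / q)) < 1 ↔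
      1 < 1 / (p : ℝ) + 1 / (q : ℝ) + 2 / (m : ℝ) := by
  have hp' : (2:ℝ) ≤ (p:ℝ) := by exact_mod_cast hp
  have hq' : (2:ℝ) ≤ (q:ℝ) := by exact_mod_cast hq
  have hm' : (3:ℝ) ≤ (m:ℝ) := by exact_mod_cast hm
  have hp0 : (0:ℝ) < p := by linarith
  have hq0 : (0:ℝ) < q := by linarith
  have hm0 : (0:ℝ) < m := by linarith
  have hap : 0 < π / p := div_pos pi_pos hp0
  have haq : 0 < π / q := div_pos pi_pos hq0
  have hple : π / p ≤ π / 2 := div_le_div_of_nonneg_left pi_pos.le (by norm_num) hp'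
  have hqle : π / q ≤ π / 2 := div_le_div_of_nonneg_left pi_pos.le (by norm_num) hq'
  have hsp : 0 < sin (π / p) := sin_pos_of_pos_of_lt_pi hap (by linarith)
  have hsq : 0 < sin (π / q) := sin_pos_of_pos_of_lt_pi haq (by linarith)
  have hD : 0 < 2 * sin (π / p) * sin (π / q) := by positivity
  rw [div_lt_one hD]
  have key : cos (π / p - π / q) + cos (2 * π / m) < 2 * sin (π / p) * sin (π / q) ↔
      cos (π / p + π / q) < cos (π - 2 * π / m) := by
    rw [cos_pi_sub, cos_add, cos_sub]
    constructor <;> intro h <;> linarith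
  rw [key]
  have hmm : 2 * π / m ≤ 2 * π / 3 :=
    div_le_div_of_nonneg_left (by positivity) (by norm_num) hm'
  have hmm0 : 0 < 2 * π / m := by positivity
  have h1 : π / p + π / q ∈ Set.Icc 0 π := ⟨by linarith, by linarith⟩
  have h2 : π - 2 * π / m ∈ Set.Icc 0 π := ⟨by linarith [pi_pos], by linarith⟩
  rw [strictAntiOn_cos.lt_iff_gt h1 h2]
  have heq : π * (1 / (p:ℝ) + 1 / q + 2 / m) = π / p + π / q + 2 * π / m := by
    field_simp
  constructor
  · intro h
    have h2 : π * 1 < π * (1 / (p:ℝ) + 1 / q + 2 / m) := by rw [heq, mul_one]; linarith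
    exact (mul_lt_mul_iff_right₀ pi_pos).mp h2
  · intro h
    have h2 := (mul_lt_mul_iff_right₀ pi_pos).mpr h
    rw [heq, mul_one] at h2; linarith
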